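/- arXiv:1308.2396 — 4 statements merged into one kernel-verified Lean document; each statement's English description precedes it below -/
import Mathlib

section
/- Let 𝔤 = L_n (n ≥ 4) over an infinite field K. If φ is a Lie algebra automorphism of 𝔤 commuting with φ_{u,t} for all u, t ∈ K^×, then φ = φ_{a,b} for some a, b ∈ K^×; i.e., the torus D = {φ_{u,t} : u,t ∈ K^×} is its own centralizer in Aut(𝔤). -/
theorem aux_pow_ne (K : Type*) [Field K] [Infinite K] {a b : ℕ} (hab : a ≠ b) :
    ∃ u : Kˣ, (u : K) ^ a ≠ (u : K) ^ b := by
  classical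
  set p : Polynomial K := Polynomial.X ^ a - Polynomial.X ^ b with hp
  have hpne : p ≠ 0 := by
    intro h
    have := congrArg (fun q => Polynomial.coeff q a) h
    simp [hp, Polynomial.coeff_X_pow, hab] at this
  have hfin : Set.Finite ({x : K | Polynomial.IsRoot p x} ∪ {0}) :=
    (Polynomial.finite_setOf_isRoot hpne).union (Set.finite_singleton 0)
  obtain ⟨x, hx⟩ := hfin.infinite_compl.nonempty
  simp only [Set.mem_compl_iff, Set.mem_union, Set.mem_setOf_eq, Set.mem_singleton_iff,
    not_or] at hx
  refine ⟨Units.mk0 x hx.2, ?_⟩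
  have := hx.1
  simp [Polynomial.IsRoot, hp, sub_eq_zero] at this
  simpa using this

/-- For `𝔤 = Lₙ` (`n ≥ 4`) over an infinite field, any Lie algebra automorphism `φ`
commuting with every `φ_{u,t}` (where `φ_{u,t}(X₁) = u X₁`, `φ_{u,t}(Xᵢ) = u^{i-2} t Xᵢ`)
is itself of the form `φ_{a,c}`: the torus `D = {φ_{u,t}}` is its own centralizer in `Aut 𝔤`.
Here `b i = X_{i+1}`. -/
theorem stmt7 (K L : Type*) [Field K] [Infinite K] [LieRing L] [LieAlgebra K L]
    (n : ℕ) (hn : 4 ≤ n) (b : Module.Basis (Fin n) K L)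
    (hbr : ∀ i : ℕ, ∀ _ : 1 ≤ i, ∀ _ : i ≤ n - 2,
      ⁅b ⟨0, by omega⟩, b ⟨i, by omega⟩⁆ = b ⟨i + 1, by omega⟩)
    (htop : ⁅b ⟨0, by omega⟩, b ⟨n - 1, by omega⟩⁆ = 0)
    (hzero : ∀ i j : Fin n, 1 ≤ i.val → 1 ≤ j.val → ⁅b i, b j⁆ = 0)
    (Φ : Kˣ → Kˣ → (L ≃ₗ⁅K⁆ L))
    (hΦ : ∀ (u t : Kˣ) (i : Fin n), Φ u t (b i) =
      (if i.val = 0 then (u : K) else (u : K) ^ (i.val - 1) * (t : K)) • b i)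
    (φ : L ≃ₗ⁅K⁆ L)
    (hcomm : ∀ (u t : Kˣ) (x : L), φ (Φ u t x) = Φ u t (φ x)) :
    ∃ a c : Kˣ, ∀ i : Fin n, φ (b i) =
      (if i.val = 0 then (a : K) else (a : K) ^ (i.val - 1) * (c : K)) • b i := by
  classical
  set lam : Kˣ → Kˣ → Fin n → K :=
    fun u t i => if i.val = 0 then (u : K) else (u : K) ^ (i.val - 1) * (t : K) with hlam
  have hΦ' : ∀ (u t : Kˣ) (i : Fin n), Φ u t (b i) = lam u t i • b i := hΦ
  -- repr of Φ u t x
  have hrepr : ∀ (u t : Kˣ) (x : L) (j : Fin n),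
      b.repr ((Φ u t) x) j = lam u t j * b.repr x j := by
    intro u t x j
    have e : (Φ u t) x = (Φ u t).toLinearEquiv x := rfl
    rw [e]
    conv_lhs => rw [← b.sum_repr x]
    rw [map_sum, map_sum]
    simp only [map_smul]
    have e2 : ∀ i, (Φ u t).toLinearEquiv (b i) = lam u t i • b i := by
      intro i; exact hΦ' u t i
    rw [Finsupp.finset_sum_apply]
    simp only [map_smul, e2, Finsupp.smul_apply, Module.Basis.repr_self, smul_eq_mul,
      Finsupp.single_apply]
    rw [Finset.sum_eq_single j]
    · simp; ring
    · intro i _ hij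
      simp [hij]
    · simp
  -- eigenvalue equation
  have heig : ∀ (u t : Kˣ) (i j : Fin n),
      lam u t j * b.repr (φ (b i)) j = lam u t i * b.repr (φ (b i)) j := by
    intro u t i j
    have h := hcomm u t (b i)
    rw [hΦ' u t i] at h
    have hsm : φ (lam u t i • b i) = lam u t i • φ (b i) :=
      φ.toLinearEquiv.map_smul _ _
    rw [hsm] at h
    have h2 := congrArg (fun x => b.repr x j) h
    simp only [map_smul, Finsupp.smul_apply, smul_eq_mul] at h2
    rw [hrepr] at h2
    exact h2.symm
  -- off-diagonal vanish
  have hoff : ∀ i j : Fin n, i ≠ j → b.repr (φ (b i)) j = 0 := by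
    intro i j hij
    by_contra hc
    have key : ∀ u t : Kˣ, lam u t j = lam u t i := by
      intro u t
      exact mul_right_cancel₀ hc (heig u t i j)
    obtain ⟨x, hx0, hx1⟩ : ∃ x : K, x ≠ 0 ∧ x ≠ 1 := by
      obtain ⟨x, hx⟩ := Infinite.exists_notMem_finset ({0, 1} : Finset K)
      simp only [Finset.mem_insert, Finset.mem_singleton, not_or] at hx
      exact ⟨x, hx.1, hx.2⟩
    by_cases hi : i.val = 0
    · have hj : j.val ≠ 0 := by
        intro h; exact hij (Fin.ext (by omega))
      have h := key 1 (Units.mk0 x hx0)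
      simp only [hlam, hi, hj, if_pos, if_neg, Units.val_one, Units.val_mk0, one_pow,
        one_mul, if_true, ite_false, ite_true] at h
      exact hx1 h
    · by_cases hj : j.val = 0
      · have h := key 1 (Units.mk0 x hx0)
        simp only [hlam, hi, hj, Units.val_one, Units.val_mk0, one_pow, one_mul,
          ite_false, ite_true] at h
        exact hx1 h.symm
      · have hval : i.val ≠ j.val := fun h => hij (Fin.ext h)
        obtain ⟨u, hu⟩ := aux_pow_ne K (a := j.val - 1) (b := i.val - 1) (by omega)
        have h := key u 1
        simp only [hlam, hi, hj, Units.val_one, mul_one, ite_false] at h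
        exact hu h
  -- diagonal form
  set D : Fin n → K := fun i => b.repr (φ (b i)) i with hD
  have hdiag : ∀ i : Fin n, φ (b i) = D i • b i := by
    intro i
    apply b.repr.injective
    ext j
    by_cases h : j = i
    · subst h; simp [hD]
    · rw [hoff i j (fun e => h e.symm)]
      simp [Finsupp.single_apply, Ne.symm h, h]
  have hDne : ∀ i, D i ≠ 0 := by
    intro i h
    have h0 : φ (b i) = 0 := by rw [hdiag i, h, zero_smul]
    have : b i = 0 := by
      have := φ.injective (a₁ := b i) (a₂ := 0) (by simpa using h0)
      simpa using this
    exact b.ne_zero i this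
  -- recurrence
  have hrec : ∀ k : ℕ, ∀ _ : 1 ≤ k, ∀ _ : k ≤ n - 2,
      D ⟨k + 1, by omega⟩ = D ⟨0, by omega⟩ * D ⟨k, by omega⟩ := by
    intro k hk1 hk2
    have h := congrArg φ (hbr k hk1 hk2)
    rw [LieEquiv.map_lie] at h
    rw [hdiag, hdiag, hdiag, smul_lie, lie_smul, hbr k hk1 hk2, smul_smul] at h
    have h2 := congrArg (fun x => b.repr x ⟨k + 1, by omega⟩) h
    simp only [map_smul, Finsupp.smul_apply, Module.Basis.repr_self, Finsupp.single_eq_same,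
      smul_eq_mul, mul_one] at h2
    rw [← h2]
  -- closed form
  have hclosed : ∀ k : ℕ, ∀ _ : 1 ≤ k, ∀ _ : k ≤ n - 1,
      D ⟨k, by omega⟩ = D ⟨0, by omega⟩ ^ (k - 1) * D ⟨1, by omega⟩ := by
    intro k
    induction k with
    | zero => intro h _; omega
    | succ m ih =>
      intro hk1 hk2
      rcases Nat.lt_or_ge 1 (m + 1) with h1 | h1
      · have hm1 : 1 ≤ m := by omega
        have hm2 : m ≤ n - 2 := by omega
        rw [hrec m hm1 hm2, ih hm1 (by omega), ← mul_assoc, ← pow_succ']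
        congr 2
        omega
      · have : m = 0 := by omega
        subst this
        simp
  refine ⟨Units.mk0 (D ⟨0, by omega⟩) (hDne _), Units.mk0 (D ⟨1, by omega⟩) (hDne _), ?_⟩
  intro i
  rw [hdiag i]
  congr 1
  by_cases hi : i.val = 0
  · rw [if_pos hi]
    have hie : i = ⟨0, by omega⟩ := Fin.ext hi
    rw [hie]
    simp
  · rw [if_neg hi]
    have h1 : 1 ≤ i.val := by omega
    have h2 : i.val ≤ n - 1 := by omega
    have h := hclosed i.val h1 h2
    have hie : (⟨i.val, by omega⟩ : Fin n) = i := Fin.ext rfl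
    rw [hie] at h
    rw [h]
    simp
end

section
/- Let 𝔤 be an n-dimensional filiform Lie algebra over an algebraically closed field K of characteristic ≠ 2, with n ≥ 4. Then the automorphism group Aut(𝔤) is a solvable group. -/
open Module

/-- The group of Lie algebra automorphisms of `L`, realized as the subgroup of linear
automorphisms preserving the bracket. -/
def lieAut (K L : Type*) [Field K] [LieRing L] [LieAlgebra K L] : Subgroup (L ≃ₗ[K] L) where
  carrier := {e | ∀ x y : L, e ⁅x, y⁆ = ⁅e x, e y⁆}
  one_mem' := by intro x y; rfl
  mul_mem' := by
    intro e f he hf x y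
    show e (f ⁅x, y⁆) = ⁅e (f x), e (f y)⁆
    rw [hf, he]
  inv_mem' := by
    intro e he x y
    show e.symm ⁅x, y⁆ = ⁅e.symm x, e.symm y⁆
    apply e.injective
    rw [he, e.apply_symm_apply, e.apply_symm_apply, e.apply_symm_apply]


section Flag
variable {K V : Type*} [Field K] [AddCommGroup V] [Module K V] [Module.Finite K V]

/-- On a pair `A ≤ B` with corank ≤ 1, an endomorphism preserving both acts as a scalar mod `A`. -/
lemma scalar_step (A B : Submodule K V) (hAB : A ≤ B)
    (hdim : finrank K B ≤ finrank K A + 1) (f : V →ₗ[K] V)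
    (hB : ∀ x ∈ B, f x ∈ B) (hA : ∀ x ∈ A, f x ∈ A) :
    ∃ c : K, ∀ x ∈ B, f x - c • x ∈ A := by
  by_cases h : ∀ x ∈ B, x ∈ A
  · refine ⟨0, fun x hx => ?_⟩
    simpa using A.sub_mem (hA x (h x hx)) (A.smul_mem 0 (h x hx))
  · push_neg at h
    obtain ⟨v, hvB, hvA⟩ := h
    have hsup : A ⊔ Submodule.span K {v} = B := by
      apply Submodule.eq_of_le_of_finrank_le
      · exact sup_le hAB ((Submodule.span_singleton_le_iff_mem v B).mpr hvB)
      · refine le_trans hdim ?_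
        have : A < A ⊔ Submodule.span K {v} := by
          refine lt_of_le_of_ne le_sup_left (fun hEq => hvA ?_)
          rw [hEq]
          exact le_sup_right (α := Submodule K V) (a := A) (Submodule.mem_span_singleton_self v)
        exact Submodule.finrank_lt_finrank_of_lt this
    have hfv : f v ∈ A ⊔ Submodule.span K {v} := hsup ▸ hB v hvB
    obtain ⟨a, haA, w, hw, hfva⟩ := Submodule.mem_sup.mp hfv
    obtain ⟨c, rfl⟩ := Submodule.mem_span_singleton.mp hw
    refine ⟨c, fun x hxB => ?_⟩
    have hx' : x ∈ A ⊔ Submodule.span K {v} := hsup ▸ hxB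
    obtain ⟨a', ha'A, w', hw', hxa⟩ := Submodule.mem_sup.mp hx'
    obtain ⟨t, rfl⟩ := Submodule.mem_span_singleton.mp hw'
    have : f x - c • x = f a' - c • a' + t • a := by
      rw [← hxa]
      have : f (a' + t • v) = f a' + t • f v := by simp [map_add, map_smul]
      rw [this, ← hfva]
      module
    rw [this]
    exact A.add_mem (A.sub_mem (hA a' ha'A) (A.smul_mem c ha'A)) (A.smul_mem t haA)

/-- Commutator of two flag-preserving automorphisms shifts the flag by one. -/
lemma comm_step1 (W : ℕ → Submodule K V) (hmono : ∀ i, W i ≤ W (i + 1))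
    (hdim : ∀ i, finrank K (W (i + 1)) ≤ finrank K (W i) + 1)
    (g h : V ≃ₗ[K] V)
    (hg : ∀ i, (W i).map (g : V →ₗ[K] V) = W i)
    (hh : ∀ i, (W i).map (h : V →ₗ[K] V) = W i) :
    ∀ i, ∀ x ∈ W i, (g * h * g⁻¹ * h⁻¹) x - x ∈ W (i - 1) := by
  -- pointwise preservation
  have fwd : ∀ (e : V ≃ₗ[K] V), (∀ i, (W i).map (e : V →ₗ[K] V) = W i) →
      ∀ i, ∀ x ∈ W i, e x ∈ W i := fun e he i x hx => by
    rw [← he i]; exact Submodule.mem_map_of_mem hx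
  have bwd : ∀ (e : V ≃ₗ[K] V), (∀ i, (W i).map (e : V →ₗ[K] V) = W i) →
      ∀ i, ∀ x ∈ W i, e.symm x ∈ W i := fun e he i x hx => by
    rw [← he i] at hx
    obtain ⟨y, hy, rfl⟩ := hx
    simpa using hy
  intro i x hx
  set A := W (i - 1) with hA
  set B := W i with hB
  have hAB : A ≤ B := by
    rcases Nat.eq_zero_or_pos i with rfl | hi
    · exact le_refl _
    · have : i - 1 + 1 = i := by omega
      rw [hA, hB, ← this]; exact hmono _
  have hd : finrank K B ≤ finrank K A + 1 := by
    rcases Nat.eq_zero_or_pos i with rfl | hi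
    · exact Nat.le_succ _
    · have : i - 1 + 1 = i := by omega
      rw [hA, hB, ← this]; exact hdim _
  by_cases htriv : ∀ y ∈ B, y ∈ A
  · have h1 : (g * h * g⁻¹ * h⁻¹) x ∈ B := by
      show g (h (g.symm (h.symm x))) ∈ B
      exact fwd g hg i _ (fwd h hh i _ (bwd g hg i _ (bwd h hh i _ hx)))
    exact A.sub_mem (htriv _ h1) (htriv _ hx)
  · push_neg at htriv
    obtain ⟨v, hvB, hvA⟩ := htriv
    obtain ⟨cg, hcg⟩ := scalar_step A B hAB hd g.toLinearMap
      (fun y hy => fwd g hg i y hy) (fun y hy => fwd g hg (i - 1) y hy)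
    obtain ⟨ch, hch⟩ := scalar_step A B hAB hd h.toLinearMap
      (fun y hy => fwd h hh i y hy) (fun y hy => fwd h hh (i - 1) y hy)
    obtain ⟨cg', hcg'⟩ := scalar_step A B hAB hd g.symm.toLinearMap
      (fun y hy => bwd g hg i y hy) (fun y hy => bwd g hg (i - 1) y hy)
    obtain ⟨ch', hch'⟩ := scalar_step A B hAB hd h.symm.toLinearMap
      (fun y hy => bwd h hh i y hy) (fun y hy => bwd h hh (i - 1) y hy)
    -- cg * cg' = 1
    have inv_eq : ∀ (e : V ≃ₗ[K] V) (c c' : K),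
        (∀ y ∈ B, e y - c • y ∈ A) → (∀ y ∈ B, e.symm y - c' • y ∈ A) →
        (∀ i, (W i).map (e : V →ₗ[K] V) = W i) → c * c' = 1 := by
      intro e c c' hc hc' he
      have h1 : e (e.symm v) - c • (e.symm v) ∈ A := hc _ (bwd e he i v hvB)
      rw [e.apply_symm_apply] at h1
      have h2 : e.symm v - c' • v ∈ A := hc' v hvB
      have h3 : (1 - c * c') • v ∈ A := by
        have : (1 - c * c') • v = (v - c • e.symm v) + c • (e.symm v - c' • v) := by module
        rw [this]
        exact A.add_mem h1 (A.smul_mem c h2)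
      by_contra hne
      have hs : (1 - c * c') ≠ 0 := fun hs => hne (by linear_combination -hs)
      exact hvA (by simpa [smul_smul, inv_mul_cancel₀ hs] using A.smul_mem (1 - c * c')⁻¹ h3)
    have hgg : cg * cg' = 1 := inv_eq g cg cg' hcg hcg' hg
    have hhh : ch * ch' = 1 := inv_eq h ch ch' hch hch' hh
    -- accumulate along the chain
    set u1 := h.symm x with hu1
    set u2 := g.symm u1 with hu2
    have hu1B : u1 ∈ B := bwd h hh i x hx
    have hu2B : u2 ∈ B := bwd g hg i u1 hu1B
    have hu3B : h u2 ∈ B := fwd h hh i u2 hu2B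
    have m1 : u1 - ch' • x ∈ A := hch' x hx
    have m2 : u2 - (cg' * ch') • x ∈ A := by
      have e1 : u2 - (cg' * ch') • x = (u2 - cg' • u1) + cg' • (u1 - ch' • x) := by
        simp only [hu2]; module
      rw [e1]; exact A.add_mem (hcg' u1 hu1B) (A.smul_mem _ m1)
    have m3 : h u2 - (ch * (cg' * ch')) • x ∈ A := by
      have e1 : h u2 - (ch * (cg' * ch')) • x
          = (h u2 - ch • u2) + ch • (u2 - (cg' * ch') • x) := by module
      rw [e1]; exact A.add_mem (hch u2 hu2B) (A.smul_mem _ m2)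
    have m4 : g (h u2) - (cg * (ch * (cg' * ch'))) • x ∈ A := by
      have e1 : g (h u2) - (cg * (ch * (cg' * ch'))) • x
          = (g (h u2) - cg • (h u2)) + cg • (h u2 - (ch * (cg' * ch')) • x) := by module
      rw [e1]; exact A.add_mem (hcg _ hu3B) (A.smul_mem _ m3)
    have hc1 : cg * (ch * (cg' * ch')) = 1 := by
      have : cg * (ch * (cg' * ch')) = (cg * cg') * (ch * ch') := by ring
      rw [this, hgg, hhh, one_mul]
    rw [hc1, one_smul] at m4
    exact m4

/-- Commutator estimate in the unipotent filtration. -/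
lemma comm_stepJK (W : ℕ → Submodule K V) (j k : ℕ)
    (g h : V ≃ₗ[K] V)
    (hg : ∀ i, (W i).map (g : V →ₗ[K] V) = W i)
    (hh : ∀ i, (W i).map (h : V →ₗ[K] V) = W i)
    (hgj : ∀ i, ∀ x ∈ W i, g x - x ∈ W (i - j))
    (hhk : ∀ i, ∀ x ∈ W i, h x - x ∈ W (i - k)) :
    ∀ i, ∀ x ∈ W i, (g * h * g⁻¹ * h⁻¹) x - x ∈ W (i - (j + k)) := by
  have bwd : ∀ (e : V ≃ₗ[K] V), (∀ i, (W i).map (e : V →ₗ[K] V) = W i) →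
      ∀ i, ∀ x ∈ W i, e.symm x ∈ W i := fun e he i x hx => by
    rw [← he i] at hx
    obtain ⟨y, hy, rfl⟩ := hx
    simpa using hy
  intro i x hx
  set u := g.symm (h.symm x) with hu
  have huW : u ∈ W i := bwd g hg i _ (bwd h hh i x hx)
  have hgu : g u = h.symm x := by rw [hu, g.apply_symm_apply]
  have hp : h u - u ∈ W (i - k) := hhk i u huW
  have hq : g u - u ∈ W (i - j) := hgj i u huW
  have hgp : g (h u - u) - (h u - u) ∈ W (i - k - j) := hgj (i - k) _ hp
  have hhq : h (g u - u) - (g u - u) ∈ W (i - j - k) := hhk (i - j) _ hq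
  have key : (g * h * g⁻¹ * h⁻¹) x - x
      = (g (h u - u) - (h u - u)) - (h (g u - u) - (g u - u)) := by
    show g (h (g.symm (h.symm x))) - x = _
    have h1 : g (h u - u) = g (h u) - g u := by rw [map_sub]
    have h2 : h (g u - u) = h (g u) - h u := by rw [map_sub]
    rw [h1, h2, hgu, h.apply_symm_apply, ← hu]
    abel
  rw [key]
  have e1 : i - k - j = i - (j + k) := by omega
  have e2 : i - j - k = i - (j + k) := by omega
  exact Submodule.sub_mem _ (e1 ▸ hgp) (e2 ▸ hhq)

end Flag

section Master
variable {K V : Type*} [Field K] [AddCommGroup V] [Module K V] [Module.Finite K V]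

/-- A subgroup of linear automorphisms preserving a complete flag is solvable. -/
lemma solvable_of_flag (G : Subgroup (V ≃ₗ[K] V)) (W : ℕ → Submodule K V) (N : ℕ)
    (h0 : W 0 = ⊥) (htop : W N = ⊤) (hmono : ∀ i, W i ≤ W (i + 1))
    (hdim : ∀ i, finrank K (W (i + 1)) ≤ finrank K (W i) + 1)
    (hinv : ∀ g ∈ G, ∀ i, (W i).map ((g : V ≃ₗ[K] V) : V →ₗ[K] V) = W i) :
    IsSolvable G := by
  have fwd : ∀ (e : V ≃ₗ[K] V), (∀ i, (W i).map (e : V →ₗ[K] V) = W i) →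
      ∀ i, ∀ x ∈ W i, e x ∈ W i := fun e he i x hx => by
    rw [← he i]; exact Submodule.mem_map_of_mem hx
  have bwd : ∀ (e : V ≃ₗ[K] V), (∀ i, (W i).map (e : V →ₗ[K] V) = W i) →
      ∀ i, ∀ x ∈ W i, e.symm x ∈ W i := fun e he i x hx => by
    rw [← he i] at hx
    obtain ⟨y, hy, rfl⟩ := hx
    simpa using hy
  -- the unipotent filtration, as subgroups of G
  let Nsub : ℕ → Subgroup G := fun j =>
    { carrier := {g | ∀ i, ∀ x ∈ W i, (g : V ≃ₗ[K] V) x - x ∈ W (i - j)}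
      one_mem' := by intro i x hx; simpa using (W (i - j)).zero_mem
      mul_mem' := by
        intro a b ha hb i x hx
        show ((a : V ≃ₗ[K] V) * (b : V ≃ₗ[K] V)) x - x ∈ W (i - j)
        have hax : ((a : V ≃ₗ[K] V) * (b : V ≃ₗ[K] V)) x - x
            = (a : V ≃ₗ[K] V) ((b : V ≃ₗ[K] V) x - x) + ((a : V ≃ₗ[K] V) x - x) := by
          show (a : V ≃ₗ[K] V) ((b : V ≃ₗ[K] V) x) - x = _
          rw [map_sub]; abel
        rw [hax]
        exact (W (i - j)).add_mem
          (fwd _ (hinv _ a.2) (i - j) _ (hb i x hx)) (ha i x hx)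
      inv_mem' := by
        intro a ha i x hx
        show (a : V ≃ₗ[K] V).symm x - x ∈ W (i - j)
        have : (a : V ≃ₗ[K] V).symm x - x
            = -((a : V ≃ₗ[K] V).symm ((a : V ≃ₗ[K] V) x - x)) := by
          rw [map_sub, (a : V ≃ₗ[K] V).symm_apply_apply]; abel
        rw [this]
        exact (W (i - j)).neg_mem (bwd _ (hinv _ a.2) (i - j) _ (ha i x hx)) }
  have hNmem : ∀ j (g : G), g ∈ Nsub j ↔
      ∀ i, ∀ x ∈ W i, (g : V ≃ₗ[K] V) x - x ∈ W (i - j) := fun j g => Iff.rfl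
  -- derived series estimate
  have hds : ∀ m, derivedSeries G (m + 1) ≤ Nsub (2 ^ m) := by
    intro m
    induction m with
    | zero =>
      rw [derivedSeries_succ]
      rw [Subgroup.commutator_le]
      intro g _ h _
      rw [hNmem]
      exact comm_step1 W hmono hdim (g : V ≃ₗ[K] V) (h : V ≃ₗ[K] V)
        (hinv _ g.2) (hinv _ h.2)
    | succ m ih =>
      rw [derivedSeries_succ]
      rw [Subgroup.commutator_le]
      intro g hgm h hhm
      rw [hNmem]
      have : (2 : ℕ) ^ (m + 1) = 2 ^ m + 2 ^ m := by ring
      rw [this]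
      exact comm_stepJK W (2 ^ m) (2 ^ m) (g : V ≃ₗ[K] V) (h : V ≃ₗ[K] V)
        (hinv _ g.2) (hinv _ h.2) ((hNmem _ g).mp (ih hgm)) ((hNmem _ h).mp (ih hhm))
  -- the filtration terminates
  have hbot : Nsub (2 ^ N) ≤ ⊥ := by
    intro g hg
    rw [Subgroup.mem_bot]
    have hNle : N - 2 ^ N = 0 := by
      have := Nat.lt_two_pow_self (n := N)
      omega
    ext x
    have hx : x ∈ W N := htop ▸ Submodule.mem_top
    have := (hNmem _ g).mp hg N x hx
    rw [hNle, h0, Submodule.mem_bot, sub_eq_zero] at this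
    simpa using this
  refine ⟨⟨N + 1, ?_⟩⟩
  exact le_bot_iff.mp (le_trans (hds N) hbot)

end Master

section Coe
variable {K L : Type*} [Field K] [LieRing L] [LieAlgebra K L]

lemma coe_lt_coe {N M : LieSubmodule K L L} (h : N < M) :
    N.toSubmodule < M.toSubmodule := by
  rw [lt_iff_le_and_ne] at h ⊢
  exact ⟨(LieSubmodule.toSubmodule_le_toSubmodule _ _).mpr h.1,
    fun hEq => h.2 ((LieSubmodule.toSubmodule_inj _ _).mp hEq)⟩

end Coe

section Lie
variable {K L : Type*} [Field K] [LieRing L] [LieAlgebra K L]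

/-- `⁅C^i, C^j⁆ ⊆ C^(i+j+1)` for the lower central series. -/
lemma lcs_lie_lcs_le (i : ℕ) : ∀ j : ℕ,
    ⁅LieModule.lowerCentralSeries K L L i, LieModule.lowerCentralSeries K L L j⁆ ≤
      LieModule.lowerCentralSeries K L L (i + j + 1) := by
  induction i with
  | zero =>
    intro j
    simp only [Nat.zero_add]
    rw [LieModule.lowerCentralSeries_zero, LieModule.lowerCentralSeries_succ]
  | succ i ih =>
    intro j
    set S : LieSubmodule K L L :=
      { carrier := {x | ∀ m ∈ LieModule.lowerCentralSeries K L L j, ⁅x, m⁆ ∈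
          LieModule.lowerCentralSeries K L L (i + 1 + j + 1)}
        add_mem' := fun ha hb m hm => by
          rw [add_lie]; exact (LieModule.lowerCentralSeries K L L (i + 1 + j + 1)).add_mem
            (ha m hm) (hb m hm)
        zero_mem' := fun m hm => by
          rw [zero_lie]; exact (LieModule.lowerCentralSeries K L L (i + 1 + j + 1)).zero_mem
        smul_mem' := fun c a ha m hm => by
          rw [smul_lie]; exact (LieModule.lowerCentralSeries K L L (i + 1 + j + 1)).smul_mem c (ha m hm)
        lie_mem := by
          intro y x hx
          simp only [Set.mem_setOf_eq] at hx ⊢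
          intro m' hm'
          rw [lie_lie]
          refine (LieModule.lowerCentralSeries K L L (i + 1 + j + 1)).sub_mem ?_ ?_
          · have h1 : ⁅x, m'⁆ ∈ LieModule.lowerCentralSeries K L L (i + 1 + j + 1) := hx m' hm'
            have h2 : ⁅y, ⁅x, m'⁆⁆ ∈ LieModule.lowerCentralSeries K L L (i + 1 + j + 1 + 1) := by
              rw [LieModule.lowerCentralSeries_succ]
              exact LieSubmodule.lie_mem_lie (LieSubmodule.mem_top y) h1
            exact LieModule.antitone_lowerCentralSeries K L L (Nat.le_succ _) h2
          · have h1 : ⁅y, m'⁆ ∈ LieModule.lowerCentralSeries K L L j := by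
              refine LieModule.antitone_lowerCentralSeries K L L (Nat.le_succ _) ?_
              rw [LieModule.lowerCentralSeries_succ]
              exact LieSubmodule.lie_mem_lie (LieSubmodule.mem_top y) hm'
            exact hx _ h1 }
    have hmemS : ∀ x : L, x ∈ S ↔ ∀ m ∈ LieModule.lowerCentralSeries K L L j,
        ⁅x, m⁆ ∈ LieModule.lowerCentralSeries K L L (i + 1 + j + 1) := fun x => Iff.rfl
    have h1 : LieModule.lowerCentralSeries K L L (i + 1) ≤ S := by
      rw [LieModule.lowerCentralSeries_succ, LieSubmodule.lie_le_iff]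
      intro z _ w hw
      rw [hmemS]
      intro m hm
      rw [lie_lie]
      refine (LieModule.lowerCentralSeries K L L (i + 1 + j + 1)).sub_mem ?_ ?_
      · have h2 : ⁅w, m⁆ ∈ LieModule.lowerCentralSeries K L L (i + j + 1) :=
          ih j (LieSubmodule.lie_mem_lie hw hm)
        have : i + 1 + j + 1 = (i + j + 1) + 1 := by omega
        rw [this, LieModule.lowerCentralSeries_succ]
        exact LieSubmodule.lie_mem_lie (LieSubmodule.mem_top z) h2
      · have h2 : ⁅z, m⁆ ∈ LieModule.lowerCentralSeries K L L (j + 1) := by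
          rw [LieModule.lowerCentralSeries_succ]
          exact LieSubmodule.lie_mem_lie (LieSubmodule.mem_top z) hm
        have h3 := ih (j + 1) (LieSubmodule.lie_mem_lie hw h2)
        have : i + (j + 1) + 1 = i + 1 + j + 1 := by omega
        rwa [this] at h3
    rw [LieSubmodule.lie_le_iff]
    intro x hx m hm
    exact (hmemS x).mp (h1 hx) m hm

/-- If the lower central series stabilizes at `k`, it is constant from `k` on. -/
lemma lcs_stab (k : ℕ) (h : LieModule.lowerCentralSeries K L L (k + 1) = LieModule.lowerCentralSeries K L L k) :
    ∀ m, LieModule.lowerCentralSeries K L L (k + m) = LieModule.lowerCentralSeries K L L k := by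
  intro m
  induction m with
  | zero => rfl
  | succ m ih =>
    have : k + (m + 1) = (k + m) + 1 := by omega
    rw [this, LieModule.lowerCentralSeries_succ, ih, ← LieModule.lowerCentralSeries_succ, h]

/-- A bracket-preserving linear automorphism maps the lower central series into itself. -/
lemma map_lcs_le (e : L ≃ₗ[K] L) (he : ∀ x y : L, e ⁅x, y⁆ = ⁅e x, e y⁆) (k : ℕ) :
    (LieModule.lowerCentralSeries K L L k : Submodule K L).map (e : L →ₗ[K] L) ≤
      LieModule.lowerCentralSeries K L L k := by
  induction k with
  | zero =>
    intro x _
    rw [LieIdeal.toLieSubalgebra_toSubmodule, LieSubmodule.mem_toSubmodule,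
      LieModule.lowerCentralSeries_zero]
    exact LieSubmodule.mem_top x
  | succ k ih =>
    have hspan : (LieModule.lowerCentralSeries K L L (k + 1) : Submodule K L) =
        Submodule.span K {m | ∃ x ∈ (⊤ : LieIdeal K L),
          ∃ n ∈ LieModule.lowerCentralSeries K L L k, ⁅x, n⁆ = m} := by
      rw [LieModule.lowerCentralSeries_succ]
      exact LieSubmodule.lieIdeal_oper_eq_linear_span' ..
    rw [hspan, Submodule.map_span, Submodule.span_le]
    rintro _ ⟨m, ⟨x, -, nn, hn, rfl⟩, rfl⟩
    have h1 : e nn ∈ LieModule.lowerCentralSeries K L L k :=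
      ih ⟨nn, hn, rfl⟩
    have h2 : (e : L →ₗ[K] L) ⁅x, nn⁆ = ⁅e x, e nn⁆ := he x nn
    rw [SetLike.mem_coe, h2, ← hspan,
      LieIdeal.toLieSubalgebra_toSubmodule, LieSubmodule.mem_toSubmodule]
    rw [LieModule.lowerCentralSeries_succ]
    exact LieSubmodule.lie_mem_lie (LieSubmodule.mem_top _) h1

end Lie

/-- The automorphism group of an `n`-dimensional filiform Lie algebra (`n ≥ 4`) over an
algebraically closed field of characteristic `≠ 2` is solvable. -/
theorem stmt9 (K L : Type*) [Field K] [IsAlgClosed K] (hchar : ringChar K ≠ 2)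
    [LieRing L] [LieAlgebra K L] [Module.Finite K L]
    (n : ℕ) (hn : 4 ≤ n) (hdim : Module.finrank K L = n)
    (hfil1 : LieModule.lowerCentralSeries K L L (n - 2) ≠ ⊥)
    (hfil2 : LieModule.lowerCentralSeries K L L (n - 1) = ⊥) :
    IsSolvable (lieAut K L) := by
  classical
  have hnt : Nontrivial L := Module.nontrivial_of_finrank_pos
    (show 0 < finrank K L by rw [hdim]; omega)
  -- strict decrease of the lower central series below n-1
  have hstrict : ∀ k, k ≤ n - 2 → LieModule.lowerCentralSeries K L L (k + 1) < LieModule.lowerCentralSeries K L L k := by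
    intro k hk
    refine lt_of_le_of_ne (LieModule.antitone_lowerCentralSeries K L L (Nat.le_succ k)) ?_
    intro hEq
    have h1 := lcs_stab k hEq (n - 2 - k)
    have h2 := lcs_stab k hEq (n - 1 - k)
    rw [show k + (n - 2 - k) = n - 2 by omega] at h1
    rw [show k + (n - 1 - k) = n - 1 by omega] at h2
    exact hfil1 (by rw [h1, ← h2, hfil2])
  -- lower bound on dimensions
  have hlow : ∀ d k, k + d = n - 1 → d ≤ finrank K (LieModule.lowerCentralSeries K L L k).toSubmodule := by
    intro d
    induction d with
    | zero => intro k hk; exact Nat.zero_le _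
    | succ d ih =>
      intro k hk
      have h1 : finrank K (LieModule.lowerCentralSeries K L L (k + 1)).toSubmodule < finrank K (LieModule.lowerCentralSeries K L L k).toSubmodule :=
        Submodule.finrank_lt_finrank_of_lt (coe_lt_coe (hstrict k (by omega)))
      have h2 := ih (k + 1) (by omega)
      omega
  -- the derived subalgebra is not everything
  have hC1ne : LieModule.lowerCentralSeries K L L 1 ≠ ⊤ := by
    intro hEq
    have h0 : LieModule.lowerCentralSeries K L L (0 + 1) = LieModule.lowerCentralSeries K L L 0 := by
      rw [LieModule.lowerCentralSeries_zero]; exact hEq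
    have h2 := lcs_stab 0 h0 (n - 1)
    simp only [Nat.zero_add] at h2
    rw [hfil2, LieModule.lowerCentralSeries_zero] at h2
    obtain ⟨x, hx⟩ := exists_ne (0 : L)
    have hmem : x ∈ (⊥ : LieSubmodule K L L) := h2 ▸ LieSubmodule.mem_top x
    rw [LieSubmodule.mem_bot] at hmem
    exact hx hmem
  have hC1topS : (LieModule.lowerCentralSeries K L L 1).toSubmodule < ⊤ := by
    refine lt_of_le_of_ne le_top (fun hEq => hC1ne ?_)
    have h1 : (LieModule.lowerCentralSeries K L L 1).toSubmodule = (⊤ : LieSubmodule K L L).toSubmodule := by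
      rw [hEq, LieSubmodule.top_toSubmodule]
    exact (LieSubmodule.toSubmodule_inj _ _).mp h1
  -- membership-in-C2 helper
  have mem2 : ∀ z, z ∈ LieModule.lowerCentralSeries K L L 1 → ∀ y : L, ⁅y, z⁆ ∈ LieModule.lowerCentralSeries K L L 2 := by
    intro z hz y
    have h1 : ⁅y, z⁆ ∈ LieModule.lowerCentralSeries K L L (1 + 1) := by
      rw [LieModule.lowerCentralSeries_succ]
      exact LieSubmodule.lie_mem_lie (LieSubmodule.mem_top y) hz
    exact h1
  -- the derived subalgebra has codimension exactly 2
  have hCS1 : finrank K (LieModule.lowerCentralSeries K L L 1).toSubmodule = n - 2 := by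
    have hub : finrank K (LieModule.lowerCentralSeries K L L 1).toSubmodule ≤ n - 1 := by
      have h1 := Submodule.finrank_lt (K := K) (V := L) hC1topS.ne
      omega
    have hge : n - 2 ≤ finrank K (LieModule.lowerCentralSeries K L L 1).toSubmodule := by
      have := hlow (n - 2) 1 (by omega); omega
    by_contra hne
    have heq : finrank K (LieModule.lowerCentralSeries K L L 1).toSubmodule = n - 1 := by omega
    obtain ⟨v, -, hv⟩ := SetLike.exists_of_lt hC1topS
    have hsup : (LieModule.lowerCentralSeries K L L 1).toSubmodule ⊔ Submodule.span K {v} = ⊤ := by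
      apply Submodule.eq_top_of_finrank_eq
      have hle := Submodule.finrank_le ((LieModule.lowerCentralSeries K L L 1).toSubmodule ⊔ Submodule.span K {v})
      have hlt2 : (LieModule.lowerCentralSeries K L L 1).toSubmodule < (LieModule.lowerCentralSeries K L L 1).toSubmodule ⊔ Submodule.span K {v} := by
        refine lt_of_le_of_ne le_sup_left (fun hEq => hv ?_)
        rw [hEq]
        exact le_sup_right (α := Submodule K L) (a := (LieModule.lowerCentralSeries K L L 1).toSubmodule)
          (Submodule.mem_span_singleton_self v)
      have h7 := Submodule.finrank_lt_finrank_of_lt hlt2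
      omega
    have hC1C2 : LieModule.lowerCentralSeries K L L 1 ≤ LieModule.lowerCentralSeries K L L 2 := by
      have h1 : LieModule.lowerCentralSeries K L L (0 + 1) = ⁅(⊤ : LieIdeal K L), (⊤ : LieSubmodule K L L)⁆ := by
        rw [LieModule.lowerCentralSeries_succ, LieModule.lowerCentralSeries_zero]
      rw [show LieModule.lowerCentralSeries K L L 1 = LieModule.lowerCentralSeries K L L (0 + 1) from rfl, h1, LieSubmodule.lie_le_iff]
      intro x _ y _
      obtain ⟨a, ha, w, hw, hxa⟩ := Submodule.mem_sup.mp
        (hsup ▸ (Submodule.mem_top : x ∈ (⊤ : Submodule K L)))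
      obtain ⟨s, rfl⟩ := Submodule.mem_span_singleton.mp hw
      obtain ⟨b, hb, w', hw', hyb⟩ := Submodule.mem_sup.mp
        (hsup ▸ (Submodule.mem_top : y ∈ (⊤ : Submodule K L)))
      obtain ⟨t, rfl⟩ := Submodule.mem_span_singleton.mp hw'
      have ha1 : a ∈ LieModule.lowerCentralSeries K L L 1 := ha
      have hb1 : b ∈ LieModule.lowerCentralSeries K L L 1 := hb
      have expand : ⁅x, y⁆ = ⁅a, b⁆ + t • ⁅a, v⁆ + s • ⁅v, b⁆ := by
        rw [← hxa, ← hyb]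
        simp only [add_lie, lie_add, smul_lie, lie_smul, lie_self, smul_zero, add_zero]
        abel
      rw [expand]
      have m1 : ⁅a, b⁆ ∈ LieModule.lowerCentralSeries K L L 2 := mem2 b hb1 a
      have m2 : ⁅a, v⁆ ∈ LieModule.lowerCentralSeries K L L 2 := by
        have := (LieModule.lowerCentralSeries K L L 2).neg_mem (mem2 a ha1 v)
        rwa [lie_skew a v] at this
      have m3 : ⁅v, b⁆ ∈ LieModule.lowerCentralSeries K L L 2 := mem2 b hb1 v
      exact (LieModule.lowerCentralSeries K L L 2).add_mem ((LieModule.lowerCentralSeries K L L 2).add_mem m1 ((LieModule.lowerCentralSeries K L L 2).smul_mem t m2))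
        ((LieModule.lowerCentralSeries K L L 2).smul_mem s m3)
    have h8 : LieModule.lowerCentralSeries K L L 2 = LieModule.lowerCentralSeries K L L 1 :=
      le_antisymm (LieModule.antitone_lowerCentralSeries K L L (by omega)) hC1C2
    exact absurd h8 (hstrict 1 (by omega)).ne
  -- upper bounds on dimensions, hence exact dimensions
  have hup : ∀ k, 1 ≤ k → k ≤ n - 1 → finrank K (LieModule.lowerCentralSeries K L L k).toSubmodule ≤ n - 1 - k := by
    intro k
    induction k with
    | zero => intro h1 h2; exact absurd h1 (by omega)
    | succ k ih =>
      intro h1 h2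
      rcases Nat.eq_zero_or_pos k with rfl | hkpos
      · show finrank K (LieModule.lowerCentralSeries K L L 1).toSubmodule ≤ n - 1 - (0 + 1)
        omega
      · have h3 := ih (by omega) (by omega)
        have h4 : finrank K (LieModule.lowerCentralSeries K L L (k + 1)).toSubmodule < finrank K (LieModule.lowerCentralSeries K L L k).toSubmodule :=
          Submodule.finrank_lt_finrank_of_lt (coe_lt_coe (hstrict k (by omega)))
        omega
  have hdims : ∀ k, 1 ≤ k → k ≤ n - 1 → finrank K (LieModule.lowerCentralSeries K L L k).toSubmodule = n - 1 - k := by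
    intro k h1 h2
    have h3 := hup k h1 h2
    have h4 := hlow (n - 1 - k) k (by omega)
    omega
  -- centrality of C^(n-2)
  have hcent : ∀ w, w ∈ LieModule.lowerCentralSeries K L L (n - 2) → ∀ x : L, ⁅x, w⁆ = 0 := by
    intro w hw x
    have h1 : ⁅x, w⁆ ∈ LieModule.lowerCentralSeries K L L (n - 2 + 1) := by
      rw [LieModule.lowerCentralSeries_succ]
      exact LieSubmodule.lie_mem_lie (LieSubmodule.mem_top x) hw
    rw [show n - 2 + 1 = n - 1 by omega, hfil2, LieSubmodule.mem_bot] at h1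
    exact h1
  -- the characteristic hyperplane: the centralizer of C^(n-3)
  set H : Submodule K L :=
    ⨅ z : (LieModule.lowerCentralSeries K L L (n - 3)).toSubmodule, LinearMap.ker (LieAlgebra.ad K L (z : L)) with hHdef
  have hHmem : ∀ x, x ∈ H ↔ ∀ z ∈ LieModule.lowerCentralSeries K L L (n - 3), ⁅z, x⁆ = 0 := by
    intro x
    rw [hHdef]
    simp only [Submodule.mem_iInf]
    constructor
    · intro h z hz
      have h1 := h ⟨z, hz⟩
      rwa [LinearMap.mem_ker, LieAlgebra.ad_apply] at h1
    · intro h z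
      rw [LinearMap.mem_ker, LieAlgebra.ad_apply]
      exact h z.1 z.2
  have hC1H : (LieModule.lowerCentralSeries K L L 1).toSubmodule ≤ H := by
    intro x hx
    rw [hHmem]
    intro z hz
    have h1 := lcs_lie_lcs_le (K := K) (L := L) (n - 3) 1 (LieSubmodule.lie_mem_lie hz hx)
    rw [show n - 3 + 1 + 1 = n - 1 by omega, hfil2, LieSubmodule.mem_bot] at h1
    exact h1
  have hHne : H ≠ ⊤ := by
    intro hEq
    apply hfil1
    rw [show n - 2 = n - 3 + 1 by omega, LieModule.lowerCentralSeries_succ,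
      LieSubmodule.lie_eq_bot_iff]
    intro x _ m hm
    have hxH : x ∈ H := hEq ▸ Submodule.mem_top
    have h1 := (hHmem x).mp hxH m hm
    have h2 : -⁅x, m⁆ = 0 := by rw [lie_skew]; exact h1
    exact neg_eq_zero.mp h2
  have hHlt : H < ⊤ := lt_of_le_of_ne le_top hHne
  have hHub : finrank K H ≤ n - 1 := by
    have h1 := Submodule.finrank_lt (K := K) (V := L) hHlt.ne
    omega
  -- the generator z0 of C^(n-3) mod C^(n-2)
  have hlt23 : LieModule.lowerCentralSeries K L L (n - 2) < LieModule.lowerCentralSeries K L L (n - 3) := by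
    have h := hstrict (n - 3) (by omega)
    rwa [show n - 3 + 1 = n - 2 by omega] at h
  obtain ⟨z0, hz0mem, hz0not⟩ := SetLike.exists_of_lt (coe_lt_coe hlt23)
  have hz0 : z0 ∈ LieModule.lowerCentralSeries K L L (n - 3) := hz0mem
  have hsupz : (LieModule.lowerCentralSeries K L L (n - 2)).toSubmodule ⊔ Submodule.span K {z0}
      = (LieModule.lowerCentralSeries K L L (n - 3)).toSubmodule := by
    apply Submodule.eq_of_le_of_finrank_le
    · refine sup_le ((LieSubmodule.toSubmodule_le_toSubmodule _ _).mpr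
        (LieModule.antitone_lowerCentralSeries K L L (by omega))) ?_
      exact (Submodule.span_singleton_le_iff_mem z0 _).mpr hz0mem
    · have hlt2 : (LieModule.lowerCentralSeries K L L (n - 2)).toSubmodule <
          (LieModule.lowerCentralSeries K L L (n - 2)).toSubmodule ⊔ Submodule.span K {z0} := by
        refine lt_of_le_of_ne le_sup_left (fun hEq => hz0not ?_)
        have hmem : z0 ∈ (LieModule.lowerCentralSeries K L L (n - 2)).toSubmodule ⊔
            Submodule.span K {z0} :=
          le_sup_right (α := Submodule K L)
            (a := (LieModule.lowerCentralSeries K L L (n - 2)).toSubmodule)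
            (Submodule.mem_span_singleton_self z0)
        rwa [← hEq] at hmem
      have h6 := Submodule.finrank_lt_finrank_of_lt hlt2
      have d2 := hdims (n - 2) (by omega) (by omega)
      have d3 := hdims (n - 3) (by omega) (by omega)
      omega
  have hkerH : LinearMap.ker (LieAlgebra.ad K L z0) ≤ H := by
    intro x hx
    rw [LinearMap.mem_ker, LieAlgebra.ad_apply] at hx
    rw [hHmem]
    intro z hz
    have hzS : z ∈ (LieModule.lowerCentralSeries K L L (n - 3)).toSubmodule := hz
    rw [← hsupz] at hzS
    obtain ⟨w, hw, u, hu, hzwu⟩ := Submodule.mem_sup.mp hzS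
    obtain ⟨t, rfl⟩ := Submodule.mem_span_singleton.mp hu
    rw [← hzwu, add_lie, smul_lie, hx, smul_zero, add_zero]
    have h1 := hcent w hw x
    rw [← lie_skew w x, h1, neg_zero]
  have hHlb : n - 1 ≤ finrank K H := by
    have hrange : LinearMap.range (LieAlgebra.ad K L z0) ≤ (LieModule.lowerCentralSeries K L L (n - 2)).toSubmodule := by
      rintro - ⟨x, rfl⟩
      have hxtop : x ∈ LieModule.lowerCentralSeries K L L 0 := by
        rw [LieModule.lowerCentralSeries_zero]; exact LieSubmodule.mem_top x
      have h1 := lcs_lie_lcs_le (K := K) (L := L) (n - 3) 0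
        (LieSubmodule.lie_mem_lie hz0 hxtop)
      rw [show n - 3 + 0 + 1 = n - 2 by omega] at h1
      show LieAlgebra.ad K L z0 x ∈ (LieModule.lowerCentralSeries K L L (n - 2)).toSubmodule
      rw [LieAlgebra.ad_apply]
      exact h1
    have h8 := LinearMap.finrank_range_add_finrank_ker (LieAlgebra.ad K L z0)
    have h9 := Submodule.finrank_mono hrange
    have h10 := Submodule.finrank_mono hkerH
    have d2 := hdims (n - 2) (by omega) (by omega)
    rw [hdim] at h8
    omega
  have hHrank : finrank K H = n - 1 := by omega
  -- invariance under automorphisms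
  have hmapeq : ∀ (p : Submodule K L),
      (∀ e : L ≃ₗ[K] L, e ∈ lieAut K L → p.map (e : L →ₗ[K] L) ≤ p) →
      ∀ e ∈ lieAut K L, p.map (e : L →ₗ[K] L) = p := by
    intro p hp e he
    refine le_antisymm (hp e he) ?_
    intro x hx
    have h1 : e.symm x ∈ p := hp e⁻¹ ((lieAut K L).inv_mem he) ⟨x, hx, rfl⟩
    exact ⟨e.symm x, h1, by simp⟩
  have hlcsinv : ∀ e ∈ lieAut K L, ∀ k,
      ((LieModule.lowerCentralSeries K L L k).toSubmodule).map (e : L →ₗ[K] L) = (LieModule.lowerCentralSeries K L L k).toSubmodule := by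
    intro e he k
    exact hmapeq _ (fun f hf => map_lcs_le f hf k) e he
  have hHinv : ∀ e ∈ lieAut K L, H.map (e : L →ₗ[K] L) = H := by
    refine fun e he => hmapeq H ?_ e he
    intro f hf
    rintro - ⟨x, hx, rfl⟩
    rw [hHmem]
    intro z hz
    have hz1 : f.symm z ∈ (LieModule.lowerCentralSeries K L L (n - 3)).toSubmodule := by
      rw [← hlcsinv f⁻¹ ((lieAut K L).inv_mem hf) (n - 3)]
      exact ⟨z, hz, rfl⟩
    have h2 : ⁅f.symm z, x⁆ = 0 := (hHmem x).mp hx (f.symm z) hz1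
    have h3 : f ⁅f.symm z, x⁆ = ⁅f (f.symm z), f x⁆ := hf _ x
    rw [h2, map_zero, f.apply_symm_apply] at h3
    exact h3.symm
  -- the complete invariant flag
  set W : ℕ → Submodule K L := fun i =>
    if i + 1 ≤ n - 1 then (LieModule.lowerCentralSeries K L L (n - 1 - i)).toSubmodule
    else if i ≤ n - 1 then H else ⊤ with hWdef
  have hWeq1 : ∀ i, i + 1 ≤ n - 1 → W i = (LieModule.lowerCentralSeries K L L (n - 1 - i)).toSubmodule := by
    intro i h
    simp only [hWdef]
    rw [if_pos h]
  have hWeq2 : ∀ i, ¬(i + 1 ≤ n - 1) → i ≤ n - 1 → W i = H := by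
    intro i h1 h2
    simp only [hWdef]
    rw [if_neg h1, if_pos h2]
  have hWeq3 : ∀ i, ¬(i ≤ n - 1) → W i = ⊤ := by
    intro i h
    simp only [hWdef]
    rw [if_neg (by omega), if_neg h]
  have hW0 : W 0 = ⊥ := by
    rw [hWeq1 0 (by omega), show n - 1 - 0 = n - 1 from rfl, hfil2]
    exact LieSubmodule.bot_toSubmodule
  have hWn : W n = ⊤ := hWeq3 n (by omega)
  have hWmono : ∀ i, W i ≤ W (i + 1) := by
    intro i
    by_cases h1 : i + 2 ≤ n - 1
    · rw [hWeq1 i (by omega), hWeq1 (i + 1) (by omega)]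
      exact (LieSubmodule.toSubmodule_le_toSubmodule _ _).mpr
        (LieModule.antitone_lowerCentralSeries K L L (by omega))
    · by_cases h2 : i + 1 ≤ n - 1
      · rw [hWeq1 i h2, hWeq2 (i + 1) (by omega) (by omega), show n - 1 - i = 1 by omega]
        exact hC1H
      · by_cases h3 : i ≤ n - 1
        · rw [hWeq3 (i + 1) (by omega)]
          exact le_top
        · rw [hWeq3 (i + 1) (by omega)]
          exact le_top
  have hWfr : ∀ i, i ≤ n → finrank K (W i) = i := by
    intro i hi
    by_cases h1 : i + 1 ≤ n - 1
    · rw [hWeq1 i h1]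
      have h2 := hdims (n - 1 - i) (by omega) (by omega)
      omega
    · by_cases h2 : i ≤ n - 1
      · rw [hWeq2 i h1 h2]
        omega
      · rw [hWeq3 i h2]
        have h3 : finrank K (⊤ : Submodule K L) = finrank K L := finrank_top K L
        omega
  have hWdim : ∀ i, finrank K (W (i + 1)) ≤ finrank K (W i) + 1 := by
    intro i
    by_cases h : i + 1 ≤ n
    · have a1 := hWfr (i + 1) h
      have a2 := hWfr i (by omega)
      omega
    · rw [hWeq3 i (by omega), hWeq3 (i + 1) (by omega)]
      omega
  have hWinv : ∀ g ∈ lieAut K L, ∀ i,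
      (W i).map ((g : L ≃ₗ[K] L) : L →ₗ[K] L) = W i := by
    intro g hg i
    by_cases h1 : i + 1 ≤ n - 1
    · rw [hWeq1 i h1]; exact hlcsinv g hg _
    · by_cases h2 : i ≤ n - 1
      · rw [hWeq2 i h1 h2]; exact hHinv g hg
      · rw [hWeq3 i h2, Submodule.map_top, LinearEquiv.range]
  exact solvable_of_flag (lieAut K L) W n hW0 hWn hWmono hWdim hWinv
end

section
/- Let 𝔤 = L_n and 1 ≤ k ≤ n−2. Define a ℤ_k × ℤ grading by deg X_1 = (1 mod k, 0) and deg X_i = ((i−2) mod k, 1) for i = 2,…,n. Then this is a grading of L_n: for homogeneous basis elements, [𝔤_g, 𝔤_h] ⊆ 𝔤_{g+h}. -/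
/-- For `𝔤 = Lₙ` and `1 ≤ k ≤ n-2`, the assignment `deg X₁ = (1 mod k, 0)`,
`deg Xᵢ = ((i-2) mod k, 1)` for `2 ≤ i ≤ n` (here `b i = X_{i+1}`) defines a
`ℤ_k × ℤ`-grading of `Lₙ`: the homogeneous components (spans of the basis vectors of a
given degree) form a direct sum with `[𝔤_g, 𝔤_h] ⊆ 𝔤_{g+h}`. -/
theorem stmt14 (K L : Type*) [Field K] [LieRing L] [LieAlgebra K L]
    (n : ℕ) (hn : 3 ≤ n) (b : Module.Basis (Fin n) K L)
    (hbr : ∀ i : ℕ, ∀ _ : 1 ≤ i, ∀ _ : i ≤ n - 2,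
      ⁅b ⟨0, by omega⟩, b ⟨i, by omega⟩⁆ = b ⟨i + 1, by omega⟩)
    (htop : ⁅b ⟨0, by omega⟩, b ⟨n - 1, by omega⟩⁆ = 0)
    (hzero : ∀ i j : Fin n, 1 ≤ i.val → 1 ≤ j.val → ⁅b i, b j⁆ = 0)
    (k : ℕ) (hk1 : 1 ≤ k) (hk2 : k ≤ n - 2) :
    let deg : Fin n → ZMod k × ℤ := fun i =>
      if i.val = 0 then ((1 : ZMod k), 0) else (((i.val - 1 : ℕ) : ZMod k), 1)
    let comp : ZMod k × ℤ → Submodule K L := fun g => Submodule.span K (⇑b '' {i | deg i = g})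
    DirectSum.IsInternal comp ∧
      ∀ (g h : ZMod k × ℤ) (x y : L), x ∈ comp g → y ∈ comp h → ⁅x, y⁆ ∈ comp (g + h) := by
  intro deg comp
  have hmem : ∀ i : Fin n, b i ∈ comp (deg i) := fun i =>
    Submodule.subset_span ⟨i, rfl, rfl⟩
  constructor
  · apply DirectSum.isInternal_submodule_of_iSupIndep_of_iSup_eq_top
    · rw [iSupIndep_def]
      intro g
      have h1 : (⨆ (h) (_ : h ≠ g), comp h) ≤ Submodule.span K (⇑b '' {i | deg i ≠ g}) := by
        apply iSup_le; intro h; apply iSup_le; intro hne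
        apply Submodule.span_mono
        apply Set.image_mono
        intro i hi
        simp only [Set.mem_setOf_eq] at hi ⊢
        rw [hi]; exact hne
      refine Disjoint.mono_right h1 (b.linearIndependent.disjoint_span_image ?_)
      rw [Set.disjoint_left]
      intro i hi hi'
      exact hi' hi
    · rw [eq_top_iff, ← b.span_eq, Submodule.span_le]
      rintro x ⟨i, rfl⟩
      exact Submodule.mem_iSup_of_mem (deg i) (hmem i)
  · -- bracket condition
    have key : ∀ (g h : ZMod k × ℤ) (i j : Fin n), deg i = g → deg j = h →
        ⁅b i, b j⁆ ∈ comp (g + h) := by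
      have main : ∀ (i j : Fin n), i.val = 0 → 1 ≤ j.val →
          ⁅b i, b j⁆ ∈ comp (deg i + deg j) := by
        intro i j hi hj
        have hi0 : i = ⟨0, by omega⟩ := Fin.ext hi
        by_cases hle : j.val ≤ n - 2
        · have hj' : j = ⟨j.val, by omega⟩ := Fin.ext rfl
          have heq := hbr j.val hj hle
          rw [hi0, hj', heq]
          have hdeg : deg ⟨j.val + 1, by omega⟩ =
              deg ⟨0, by omega⟩ + deg ⟨j.val, by omega⟩ := by
            simp only [deg]
            rw [if_pos trivial, if_neg (show ¬(j.val = 0) by omega), Prod.mk_add_mk,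
              if_neg (show ¬(j.val + 1 = 0) by omega), Prod.mk.injEq]
            have h2 : (j.val + 1 - 1 : ℕ) = (j.val - 1) + 1 := by omega
            constructor
            · rw [h2]
              push_cast
              ring
            · norm_num
          rw [← hdeg]
          exact hmem _
        · have hjn : j = ⟨n - 1, by omega⟩ := Fin.ext (by simp only [Fin.val_mk]; have := j.isLt; omega)
          rw [hi0, hjn, htop]
          exact Submodule.zero_mem _
      intro g h i j hgi hhj
      subst hgi hhj
      rcases Nat.eq_zero_or_pos i.val with hi | hi
      · rcases Nat.eq_zero_or_pos j.val with hj | hj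
        · have : i = j := Fin.ext (by omega)
          rw [this, lie_self]
          exact Submodule.zero_mem _
        · exact main i j hi hj
      · rcases Nat.eq_zero_or_pos j.val with hj | hj
        · have : ⁅b i, b j⁆ = -⁅b j, b i⁆ := by rw [lie_skew]
          rw [this, add_comm]
          exact Submodule.neg_mem _ (main j i hj hi)
        · rw [hzero i j hi hj]
          exact Submodule.zero_mem _
    intro g h x y hx hy
    induction hx using Submodule.span_induction with
    | mem x hxm =>
      obtain ⟨i, hi, rfl⟩ := hxm
      induction hy using Submodule.span_induction with
      | mem y hym =>
        obtain ⟨j, hj, rfl⟩ := hym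
        exact key g h i j hi hj
      | zero => rw [lie_zero]; exact Submodule.zero_mem _
      | add y z _ _ hy hz => rw [lie_add]; exact Submodule.add_mem _ hy hz
      | smul c y _ hy => rw [lie_smul]; exact Submodule.smul_mem _ _ hy
    | zero => rw [zero_lie]; exact Submodule.zero_mem _
    | add x z _ _ hx' hz' => rw [add_lie]; exact Submodule.add_mem _ hx' hz'
    | smul c x _ hx' => rw [smul_lie]; exact Submodule.smul_mem _ _ hx'
end

section
/- For each k ≥ 1 let n = k + 5 and let 𝔤 be the (n+1)-dimensional Lie algebra with basis e_0, e_1, …, e_n and nonzero brackets μ(e_0, e_i) = e_{i+1} for 2 ≤ i ≤ k+3, μ(e_1, e_2) = e_4 + e_{k+4}, and μ(e_1, e_i) = e_{i+2} for 3 ≤ i ≤ k+2. Then μ satisfies the Jacobi identity, so 𝔤 is a Lie algebra. -/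
/-- `L` carries the structure constants of the `(k+6)`-dimensional algebra
`μ = μ₀ + ψ_{1,4} + ψ_{1,4+k}` on a basis `b` (with `b i = eᵢ`, `i = 0, …, k+5`):
`μ(e₀, eᵢ) = eᵢ₊₁` for `2 ≤ i ≤ k+3`, `μ(e₁, e₂) = e₄ + e_{k+4}`,
`μ(e₁, eᵢ) = eᵢ₊₂` for `3 ≤ i ≤ k+2`, and all other brackets of basis vectors zero. -/
def Stmt18Structure (K : Type*) [Field K] (k : ℕ) (hk : 1 ≤ k)
    (L : Type*) [LieRing L] [LieAlgebra K L] : Prop :=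
  ∃ b : Module.Basis (Fin (k + 6)) K L,
    (∀ i : ℕ, ∀ _ : 2 ≤ i, ∀ _ : i ≤ k + 3,
      ⁅b ⟨0, by omega⟩, b ⟨i, by omega⟩⁆ = b ⟨i + 1, by omega⟩) ∧
    ⁅b ⟨1, by omega⟩, b ⟨2, by omega⟩⁆ = b ⟨4, by omega⟩ + b ⟨k + 4, by omega⟩ ∧
    (∀ i : ℕ, ∀ _ : 3 ≤ i, ∀ _ : i ≤ k + 2,
      ⁅b ⟨1, by omega⟩, b ⟨i, by omega⟩⁆ = b ⟨i + 2, by omega⟩) ∧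
    ⁅b ⟨0, by omega⟩, b ⟨1, by omega⟩⁆ = 0 ∧
    ⁅b ⟨0, by omega⟩, b ⟨k + 4, by omega⟩⁆ = 0 ∧
    ⁅b ⟨0, by omega⟩, b ⟨k + 5, by omega⟩⁆ = 0 ∧
    ⁅b ⟨1, by omega⟩, b ⟨k + 3, by omega⟩⁆ = 0 ∧
    ⁅b ⟨1, by omega⟩, b ⟨k + 4, by omega⟩⁆ = 0 ∧
    ⁅b ⟨1, by omega⟩, b ⟨k + 5, by omega⟩⁆ = 0 ∧
    (∀ i j : Fin (k + 6), 2 ≤ i.val → i.val < j.val → ⁅b i, b j⁆ = 0)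

namespace Stmt18Aux

variable (K : Type) [Field K] (k : ℕ)

/-- the map `ad e₀` -/
def amap : (Fin (k+6) → K) →ₗ[K] (Fin (k+6) → K) where
  toFun v := fun j => if h : 3 ≤ j.val ∧ j.val ≤ k + 4 then v ⟨j.val - 1, by omega⟩ else 0
  map_add' x y := by
    funext j; by_cases h : 3 ≤ j.val ∧ j.val ≤ k + 4 <;> simp [h]
  map_smul' t x := by
    funext j; by_cases h : 3 ≤ j.val ∧ j.val ≤ k + 4 <;> simp [h]

/-- the map `ad e₁` -/
def bmap : (Fin (k+6) → K) →ₗ[K] (Fin (k+6) → K) where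
  toFun v := fun j =>
    (if h : 4 ≤ j.val ∧ j.val ≤ k + 4 then v ⟨j.val - 2, by omega⟩ else 0) +
    (if h : j.val = k + 4 then v ⟨2, by omega⟩ else 0)
  map_add' x y := by
    funext j
    by_cases h : 4 ≤ j.val ∧ j.val ≤ k + 4 <;> by_cases h2 : j.val = k + 4 <;>
      simp [h, h2] <;> ring
  map_smul' t x := by
    funext j
    by_cases h : 4 ≤ j.val ∧ j.val ≤ k + 4 <;> by_cases h2 : j.val = k + 4 <;>
      simp [h, h2] <;> ring

variable {K k}

lemma amap_apply (v : Fin (k+6) → K) (j : Fin (k+6)) :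
    amap K k v j = if h : 3 ≤ j.val ∧ j.val ≤ k + 4 then v ⟨j.val - 1, by omega⟩ else 0 := rfl

lemma bmap_apply (v : Fin (k+6) → K) (j : Fin (k+6)) :
    bmap K k v j =
      (if h : 4 ≤ j.val ∧ j.val ≤ k + 4 then v ⟨j.val - 2, by omega⟩ else 0) +
      (if h : j.val = k + 4 then v ⟨2, by omega⟩ else 0) := rfl

lemma amap_eq_zero (v : Fin (k+6) → K) (j : Fin (k+6)) (hj : j.val < 3) :
    amap K k v j = 0 := by
  rw [amap_apply, dif_neg (by omega)]

lemma bmap_eq_zero (v : Fin (k+6) → K) (j : Fin (k+6)) (hj : j.val < 4) :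
    bmap K k v j = 0 := by
  rw [bmap_apply, dif_neg (by omega), dif_neg (by omega), add_zero]

@[simp] lemma amap_coord0 (v : Fin (k+6) → K) {h} : amap K k v ⟨0, h⟩ = 0 :=
  amap_eq_zero v _ (by show (0:ℕ) < 3; omega)

@[simp] lemma amap_coord1 (v : Fin (k+6) → K) {h} : amap K k v ⟨1, h⟩ = 0 :=
  amap_eq_zero v _ (by show (1:ℕ) < 3; omega)

@[simp] lemma bmap_coord0 (v : Fin (k+6) → K) {h} : bmap K k v ⟨0, h⟩ = 0 :=
  bmap_eq_zero v _ (by show (0:ℕ) < 4; omega)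

@[simp] lemma bmap_coord1 (v : Fin (k+6) → K) {h} : bmap K k v ⟨1, h⟩ = 0 :=
  bmap_eq_zero v _ (by show (1:ℕ) < 4; omega)

@[simp] lemma amap_coord0' (v : Fin (k+6) → K) : amap K k v 0 = 0 :=
  amap_eq_zero v _ (by simp)

@[simp] lemma amap_coord1' (v : Fin (k+6) → K) : amap K k v 1 = 0 :=
  amap_eq_zero v _ (by simp)

@[simp] lemma bmap_coord0' (v : Fin (k+6) → K) : bmap K k v 0 = 0 :=
  bmap_eq_zero v _ (by simp)

@[simp] lemma bmap_coord1' (v : Fin (k+6) → K) : bmap K k v 1 = 0 :=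
  bmap_eq_zero v _ (by simp)

lemma comm (v : Fin (k+6) → K) : amap K k (bmap K k v) = bmap K k (amap K k v) := by
  funext j
  simp only [amap_apply, bmap_apply]
  split_ifs <;>
    first
      | rfl
      | omega
      | simp_all
      | (exact congrArg v (Fin.ext (by omega)))
      | (simp only [add_zero, zero_add] <;>
          first
            | omega
            | (exact congrArg v (Fin.ext (by omega))))

variable (K k) in
/-- the bracket -/
def br (x y : Fin (k+6) → K) : Fin (k+6) → K :=
  x ⟨0, by omega⟩ • amap K k y + x ⟨1, by omega⟩ • bmap K k y
    - y ⟨0, by omega⟩ • amap K k x - y ⟨1, by omega⟩ • bmap K k x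

lemma br_coord0 (x y : Fin (k+6) → K) {h} : br K k x y ⟨0, h⟩ = 0 := by
  simp [br]

lemma br_coord1 (x y : Fin (k+6) → K) {h} : br K k x y ⟨1, h⟩ = 0 := by
  simp [br]

lemma leibniz (x y z : Fin (k+6) → K) :
    br K k x (br K k y z) = br K k (br K k x y) z + br K k y (br K k x z) := by
  simp only [br, Pi.add_apply, Pi.sub_apply, Pi.smul_apply, amap_coord0, amap_coord1,
    bmap_coord0, bmap_coord1, smul_zero, smul_eq_mul, mul_zero, add_zero, sub_zero, zero_add,
    map_add, map_sub, map_smul, comm]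
  module


lemma br_def (x y : Fin (k+6) → K) :
    br K k x y =
      x ⟨0, by omega⟩ • amap K k y + x ⟨1, by omega⟩ • bmap K k y
        - y ⟨0, by omega⟩ • amap K k x - y ⟨1, by omega⟩ • bmap K k x := rfl

lemma fin_ne {n a : ℕ} {h : a < n} {j : Fin n} (hne : j.val ≠ a) :
    j ≠ (⟨a, h⟩ : Fin n) := fun he => hne (congrArg Fin.val he)

lemma fin_ne' {n a : ℕ} {h : a < n} {j : Fin n} (hne : a ≠ j.val) :
    (⟨a, h⟩ : Fin n) ≠ j := fun he => hne (congrArg Fin.val he)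

lemma fin_mk_ne {n a b : ℕ} {ha : a < n} {hb : b < n} (h : a ≠ b) :
    (⟨a, ha⟩ : Fin n) ≠ (⟨b, hb⟩ : Fin n) := fun he => h (congrArg Fin.val he)

lemma fin_mk_eq {n a b : ℕ} {ha : a < n} {hb : b < n} (h : a = b) :
    (⟨a, ha⟩ : Fin n) = (⟨b, hb⟩ : Fin n) := Fin.ext h

lemma fin_eq {n a : ℕ} {ha : a < n} {j : Fin n} (h : j.val = a) :
    j = (⟨a, ha⟩ : Fin n) := Fin.ext h

lemma br_single_0i (i : Fin (k+6)) (hi : 2 ≤ i.val) :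
    br K k (Pi.single (⟨0, by omega⟩ : Fin (k+6)) (1:K)) (Pi.single i 1) =
      amap K k (Pi.single i 1) := by
  rw [br_def, Pi.single_eq_same (M := fun _ : Fin (k+6) => K),
    Pi.single_eq_of_ne (M := fun _ : Fin (k+6) => K) (fin_mk_ne (show (1:ℕ) ≠ 0 by omega)) (1:K),
    Pi.single_eq_of_ne (M := fun _ : Fin (k+6) => K) (fin_ne' (show (0:ℕ) ≠ i.val by omega)) (1:K),
    Pi.single_eq_of_ne (M := fun _ : Fin (k+6) => K) (fin_ne' (show (1:ℕ) ≠ i.val by omega)) (1:K)]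
  module

lemma br_single_1i (i : Fin (k+6)) (hi : 2 ≤ i.val) :
    br K k (Pi.single (⟨1, by omega⟩ : Fin (k+6)) (1:K)) (Pi.single i 1) =
      bmap K k (Pi.single i 1) := by
  rw [br_def, Pi.single_eq_same (M := fun _ : Fin (k+6) => K),
    Pi.single_eq_of_ne (M := fun _ : Fin (k+6) => K) (fin_mk_ne (show (0:ℕ) ≠ 1 by omega)) (1:K),
    Pi.single_eq_of_ne (M := fun _ : Fin (k+6) => K) (fin_ne' (show (0:ℕ) ≠ i.val by omega)) (1:K),
    Pi.single_eq_of_ne (M := fun _ : Fin (k+6) => K) (fin_ne' (show (1:ℕ) ≠ i.val by omega)) (1:K)]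
  module

lemma br_single_ij (i j : Fin (k+6)) (hi : 2 ≤ i.val) (hj : 2 ≤ j.val) :
    br K k (Pi.single i (1:K)) (Pi.single j 1) = 0 := by
  rw [br_def,
    Pi.single_eq_of_ne (M := fun _ : Fin (k+6) => K) (fin_ne' (show (0:ℕ) ≠ i.val by omega)) (1:K),
    Pi.single_eq_of_ne (M := fun _ : Fin (k+6) => K) (fin_ne' (show (1:ℕ) ≠ i.val by omega)) (1:K),
    Pi.single_eq_of_ne (M := fun _ : Fin (k+6) => K) (fin_ne' (show (0:ℕ) ≠ j.val by omega)) (1:K),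
    Pi.single_eq_of_ne (M := fun _ : Fin (k+6) => K) (fin_ne' (show (1:ℕ) ≠ j.val by omega)) (1:K)]
  module

lemma amap_single (i : ℕ) (h2 : 2 ≤ i) (h3 : i ≤ k+3) :
    amap K k (Pi.single (⟨i, by omega⟩ : Fin (k+6)) (1:K)) =
      Pi.single (⟨i+1, by omega⟩ : Fin (k+6)) 1 := by
  funext j
  rw [amap_apply]
  split_ifs with hc
  · rw [Pi.single_apply (M := K),
      Pi.single_apply (M := K)]
    by_cases hj : j.val = i + 1
    · rw [if_pos (fin_mk_eq (show j.val - 1 = i by omega)),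
        if_pos (fin_eq (show j.val = i + 1 by omega))]
    · rw [if_neg (fin_mk_ne (show j.val - 1 ≠ i by omega)),
        if_neg (fin_ne (show j.val ≠ i + 1 from hj))]
  · rw [Pi.single_apply (M := K),
      if_neg (fin_ne (show j.val ≠ i + 1 by omega))]

lemma amap_single_zero (i : Fin (k+6)) (hi : i.val ≤ 1 ∨ k + 4 ≤ i.val) :
    amap K k (Pi.single i (1:K)) = 0 := by
  funext j
  rw [amap_apply]
  simp only [Pi.zero_apply]
  split_ifs with hc
  · exact Pi.single_eq_of_ne (M := fun _ : Fin (k+6) => K) (fin_ne' (show j.val - 1 ≠ i.val by omega)) (1:K)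
  · rfl

lemma bmap_single (i : ℕ) (h2 : 3 ≤ i) (h3 : i ≤ k+2) :
    bmap K k (Pi.single (⟨i, by omega⟩ : Fin (k+6)) (1:K)) =
      Pi.single (⟨i+2, by omega⟩ : Fin (k+6)) 1 := by
  funext j
  rw [bmap_apply]
  split_ifs with h1 hk4 hk4
  · rw [Pi.single_eq_of_ne (M := fun _ : Fin (k+6) => K) (fin_mk_ne (show (2:ℕ) ≠ i by omega)) (1:K),
      add_zero, Pi.single_apply (M := K),
      Pi.single_apply (M := K)]
    by_cases hj : j.val = i + 2
    · rw [if_pos (fin_mk_eq (show j.val - 2 = i by omega)),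
        if_pos (fin_eq (show j.val = i + 2 by omega))]
    · rw [if_neg (fin_mk_ne (show j.val - 2 ≠ i by omega)),
        if_neg (fin_ne (show j.val ≠ i + 2 from hj))]
  · rw [add_zero, Pi.single_apply (M := K),
      Pi.single_apply (M := K)]
    by_cases hj : j.val = i + 2
    · rw [if_pos (fin_mk_eq (show j.val - 2 = i by omega)),
        if_pos (fin_eq (show j.val = i + 2 by omega))]
    · rw [if_neg (fin_mk_ne (show j.val - 2 ≠ i by omega)),
        if_neg (fin_ne (show j.val ≠ i + 2 from hj))]
  · exact absurd hk4 (by omega)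
  · rw [add_zero, Pi.single_apply (M := K),
      if_neg (fin_ne (show j.val ≠ i + 2 by omega))]

lemma bmap_single2 (hk : 1 ≤ k) :
    bmap K k (Pi.single (⟨2, by omega⟩ : Fin (k+6)) (1:K)) =
      Pi.single (⟨4, by omega⟩ : Fin (k+6)) 1 +
        Pi.single (⟨k+4, by omega⟩ : Fin (k+6)) 1 := by
  funext j
  rw [bmap_apply, Pi.add_apply]
  split_ifs with h1 hk4 hk4
  · rw [Pi.single_eq_of_ne (M := fun _ : Fin (k+6) => K) (fin_mk_ne (show j.val - 2 ≠ 2 by omega)) (1:K),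
      Pi.single_eq_same (M := fun _ : Fin (k+6) => K), zero_add,
      Pi.single_eq_of_ne (M := fun _ : Fin (k+6) => K) (fin_ne (show j.val ≠ 4 by omega)) (1:K),
      zero_add,
      show j = (⟨k+4, by omega⟩ : Fin (k+6)) from fin_eq hk4,
      Pi.single_eq_same (M := fun _ : Fin (k+6) => K)]
  · rw [add_zero,
      Pi.single_eq_of_ne (M := fun _ : Fin (k+6) => K) (fin_ne (show j.val ≠ k + 4 from hk4)) (1:K),
      add_zero, Pi.single_apply (M := K),
      Pi.single_apply (M := K)]
    by_cases hj : j.val = 4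
    · rw [if_pos (fin_mk_eq (show j.val - 2 = 2 by omega)),
        if_pos (fin_eq (show j.val = 4 from hj))]
    · rw [if_neg (fin_mk_ne (show j.val - 2 ≠ 2 by omega)),
        if_neg (fin_ne (show j.val ≠ 4 from hj))]
  · exact absurd hk4 (by omega)
  · rw [add_zero,
      Pi.single_eq_of_ne (M := fun _ : Fin (k+6) => K) (fin_ne (show j.val ≠ 4 by omega)) (1:K),
      Pi.single_eq_of_ne (M := fun _ : Fin (k+6) => K) (fin_ne (show j.val ≠ k + 4 from hk4)) (1:K),
      add_zero]

lemma bmap_single_zero (i : Fin (k+6)) (hi : i.val ≤ 1 ∨ k + 3 ≤ i.val) :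
    bmap K k (Pi.single i (1:K)) = 0 := by
  funext j
  rw [bmap_apply]
  simp only [Pi.zero_apply]
  split_ifs with h1 hk4 hk4
  · rw [Pi.single_eq_of_ne (M := fun _ : Fin (k+6) => K) (fin_ne' (show j.val - 2 ≠ i.val by omega)) (1:K),
      Pi.single_eq_of_ne (M := fun _ : Fin (k+6) => K) (fin_ne' (show (2:ℕ) ≠ i.val by omega)) (1:K),
      add_zero]
  · rw [Pi.single_eq_of_ne (M := fun _ : Fin (k+6) => K) (fin_ne' (show j.val - 2 ≠ i.val by omega)) (1:K),
      add_zero]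
  · rw [Pi.single_eq_of_ne (M := fun _ : Fin (k+6) => K) (fin_ne' (show (2:ℕ) ≠ i.val by omega)) (1:K),
      zero_add]
  · rw [add_zero]

lemma br_single_01 :
    br K k (Pi.single (⟨0, by omega⟩ : Fin (k+6)) (1:K))
      (Pi.single (⟨1, by omega⟩ : Fin (k+6)) 1) = 0 := by
  rw [br_def, Pi.single_eq_same (M := fun _ : Fin (k+6) => K),
    Pi.single_eq_same (M := fun _ : Fin (k+6) => K),
    Pi.single_eq_of_ne (M := fun _ : Fin (k+6) => K) (fin_mk_ne (show (1:ℕ) ≠ 0 by omega)) (1:K),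
    Pi.single_eq_of_ne (M := fun _ : Fin (k+6) => K) (fin_mk_ne (show (0:ℕ) ≠ 1 by omega)) (1:K),
    amap_single_zero ⟨1, by omega⟩ (Or.inl (show (1:ℕ) ≤ 1 from le_refl 1)),
    bmap_single_zero ⟨1, by omega⟩ (Or.inl (show (1:ℕ) ≤ 1 from le_refl 1)),
    bmap_single_zero ⟨0, by omega⟩ (Or.inl (show (0:ℕ) ≤ 1 by omega))]
  module

variable (K k) in
def lr : LieRing (Fin (k+6) → K) :=
  { (inferInstance : AddCommGroup (Fin (k+6) → K)) with
    bracket := br K k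
    add_lie := fun x y z => by
      simp only [br, Pi.add_apply, map_add]
      module
    lie_add := fun x y z => by
      simp only [br, Pi.add_apply, map_add]
      module
    lie_self := fun x => by
      simp only [br]
      module
    leibniz_lie := leibniz }

variable (K k) in
def la : @LieAlgebra K (Fin (k+6) → K) _ (lr K k) := by
  letI := lr K k
  exact
    { (inferInstance : Module K (Fin (k+6) → K)) with
      lie_smul := fun t x y => by
        show br K k x (t • y) = t • br K k x y
        simp only [br, Pi.smul_apply, map_smul, smul_eq_mul]
        module }

end Stmt18Aux





open Stmt18Aux

/-- For each `k ≥ 1`, the multiplication `μ = μ₀ + ψ_{1,4} + ψ_{1,4+k}` on the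
`(k+6)`-dimensional space satisfies the Jacobi identity: there exists a Lie algebra with
these structure constants. -/
theorem stmt18 (K : Type) [Field K] [CharZero K] (k : ℕ) (hk : 1 ≤ k) :
    ∃ (L : Type) (iR : LieRing L) (iA : @LieAlgebra K L _ iR),
      @Stmt18Structure K _ k hk L iR iA := by
  refine ⟨Fin (k+6) → K, lr K k, la K k,
    Pi.basisFun K (Fin (k+6)), ?_, ?_, ?_, ?_, ?_, ?_, ?_, ?_, ?_, ?_⟩
  · intro i h2 h3
    erw [Pi.basisFun_apply, Pi.basisFun_apply, Pi.basisFun_apply]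
    exact (br_single_0i ⟨i, by omega⟩ h2).trans (amap_single i h2 h3)
  · erw [Pi.basisFun_apply, Pi.basisFun_apply, Pi.basisFun_apply, Pi.basisFun_apply]
    exact (br_single_1i ⟨2, by omega⟩ (le_refl 2)).trans (bmap_single2 hk)
  · intro i h3 h4
    erw [Pi.basisFun_apply, Pi.basisFun_apply, Pi.basisFun_apply]
    exact (br_single_1i ⟨i, by omega⟩ (show 2 ≤ i by omega)).trans (bmap_single i h3 h4)
  · erw [Pi.basisFun_apply, Pi.basisFun_apply]
    exact br_single_01
  · erw [Pi.basisFun_apply, Pi.basisFun_apply]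
    exact (br_single_0i ⟨k+4, by omega⟩ (show 2 ≤ k+4 by omega)).trans
      (amap_single_zero _ (Or.inr (show k+4 ≤ k+4 from le_refl _)))
  · erw [Pi.basisFun_apply, Pi.basisFun_apply]
    exact (br_single_0i ⟨k+5, by omega⟩ (show 2 ≤ k+5 by omega)).trans
      (amap_single_zero _ (Or.inr (show k+4 ≤ k+5 by omega)))
  · erw [Pi.basisFun_apply, Pi.basisFun_apply]
    exact (br_single_1i ⟨k+3, by omega⟩ (show 2 ≤ k+3 by omega)).trans
      (bmap_single_zero _ (Or.inr (show k+3 ≤ k+3 from le_refl _)))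
  · erw [Pi.basisFun_apply, Pi.basisFun_apply]
    exact (br_single_1i ⟨k+4, by omega⟩ (show 2 ≤ k+4 by omega)).trans
      (bmap_single_zero _ (Or.inr (show k+3 ≤ k+4 by omega)))
  · erw [Pi.basisFun_apply, Pi.basisFun_apply]
    exact (br_single_1i ⟨k+5, by omega⟩ (show 2 ≤ k+5 by omega)).trans
      (bmap_single_zero _ (Or.inr (show k+3 ≤ k+5 by omega)))
  · intro i j hi hij
    erw [Pi.basisFun_apply, Pi.basisFun_apply]
    exact br_single_ij i j hi (by omega)
end
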